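/- Every decorated noncrossing partition p ∈ NC_Γ(g₁,…,g_k; h₁,…,h_l) can be obtained from the elementary decorated partitions — identity partitions (g;g) for g ∈ Γ, multiplication partitions (g,h; gh) for g,h ∈ Γ, and unit partitions (∅; e) — using tensor products, compositions and adjoints. -/

import Mathlib

open scoped Classical

/-- The `k` upper and `l` lower points of a partition diagram. -/
abbrev Pt (k l : ℕ) := Sum (Fin k) (Fin l)

/-- Position of a point on the boundary circle: upper points left to right,
then lower points right to left. -/
def ptIdx {k l : ℕ} : Pt k l → ℕ :=
  Sum.elim (fun i => (i : ℕ)) (fun j => k + (l - 1 - (j : ℕ)))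

/-- A partition of the `k + l` points (a setoid) is noncrossing if whenever
`a < b < x < y` in the circular order, `a ∼ x` and `b ∼ y` imply `a ∼ b`. -/
def Noncrossing {k l : ℕ} (p : Setoid (Pt k l)) : Prop :=
  ∀ a b x y : Pt k l, ptIdx a < ptIdx b → ptIdx b < ptIdx x → ptIdx x < ptIdx y →
    p.r a x → p.r b y → p.r a b

/-- `b(p)`: number of blocks of a partition. -/
noncomputable def blocks {α : Type*} (p : Setoid α) : ℕ := Nat.card (Quotient p)

/-- The three rows of points appearing in a vertical composition. -/
abbrev X3 (k l w : ℕ) := Sum (Fin k) (Sum (Fin l) (Fin w))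

def upEmb {k l w : ℕ} : Pt k l → X3 k l w := Sum.map id Sum.inl
def loEmb {k l w : ℕ} : Pt l w → X3 k l w := Sum.inr
def outEmb {k l w : ℕ} : Pt k w → X3 k l w := Sum.map id Sum.inr

/-- The partition of the three rows generated by `p` on the two upper rows and
`q` on the two lower rows. -/
def jointSetoid {k l w : ℕ} (p : Setoid (Pt k l)) (q : Setoid (Pt l w)) :
    Setoid (X3 k l w) :=
  Relation.EqvGen.setoid (fun x y =>
    (∃ a b, p.r a b ∧ x = upEmb a ∧ y = upEmb b) ∨
    (∃ a b, q.r a b ∧ x = loEmb a ∧ y = loEmb b))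

/-- Vertical composition `q ∘ p ∈ NC(k,w)` of `p ∈ NC(k,l)` and `q ∈ NC(l,w)`. -/
def compPart {k l w : ℕ} (p : Setoid (Pt k l)) (q : Setoid (Pt l w)) : Setoid (Pt k w) :=
  Setoid.comap outEmb (jointSetoid p q)

/-- `cb(p,q)`: the number of central blocks removed in the composition, i.e. blocks of
the joint partition consisting only of middle points. -/
noncomputable def cb {k l w : ℕ} (p : Setoid (Pt k l)) (q : Setoid (Pt l w)) : ℕ :=
  Nat.card {cls : Quotient (jointSetoid p q) //
    ∀ x : X3 k l w, Quotient.mk (jointSetoid p q) x = cls → ∃ j : Fin l, x = Sum.inr (Sum.inl j)}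

/-- `cy(p,q) = l + b(qp) + cb(p,q) - b(p) - b(q)`: the number of cycles removed. -/
noncomputable def cy {k l w : ℕ} (p : Setoid (Pt k l)) (q : Setoid (Pt l w)) : ℤ :=
  (l : ℤ) + blocks (compPart p q) + cb p q - blocks p - blocks q

def tleft {k l v w : ℕ} : Pt k l → Pt (k + v) (l + w) :=
  Sum.map (Fin.castAdd v) (Fin.castAdd w)

def tright {k l v w : ℕ} : Pt v w → Pt (k + v) (l + w) :=
  Sum.map (Fin.natAdd k) (Fin.natAdd l)

/-- Horizontal concatenation (tensor product) of partitions. -/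
def tensorPart {k l v w : ℕ} (p : Setoid (Pt k l)) (q : Setoid (Pt v w)) :
    Setoid (Pt (k + v) (l + w)) :=
  Relation.EqvGen.setoid (fun x y =>
    (∃ a b, p.r a b ∧ x = tleft a ∧ y = tleft b) ∨
    (∃ a b, q.r a b ∧ x = tright a ∧ y = tright b))

/-- Reflection (adjoint) of a partition, exchanging the upper and lower rows. -/
def adjPart {k l : ℕ} (p : Setoid (Pt k l)) : Setoid (Pt l k) :=
  Setoid.comap Sum.swap p

variable {Γ : Type*} [Group Γ]

/-- Ordered product of the decorations of the upper points of a block. -/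
noncomputable def wordUp {k l : ℕ} (g : Fin k → Γ) (p : Setoid (Pt k l))
    (cls : Quotient p) : Γ :=
  (((List.finRange k).filter
    (fun i => decide (Quotient.mk p (Sum.inl i : Pt k l) = cls))).map g).prod

/-- Ordered product of the decorations of the lower points of a block. -/
noncomputable def wordLo {k l : ℕ} (h : Fin l → Γ) (p : Setoid (Pt k l))
    (cls : Quotient p) : Γ :=
  (((List.finRange l).filter
    (fun j => decide (Quotient.mk p (Sum.inr j : Pt k l) = cls))).map h).prod

/-- `p ∈ NC_Γ(g₁,…,g_k; h₁,…,h_l)`: in each block, the ordered product of the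
upper decorations equals the ordered product of the lower decorations
(empty products being the unit of `Γ`). -/
def DecOK {k l : ℕ} (p : Setoid (Pt k l)) (g : Fin k → Γ) (h : Fin l → Γ) : Prop :=
  ∀ cls : Quotient p, wordUp g p cls = wordLo h p cls

/-- The decorated partitions generated by the elementary decorated partitions:
identities `(g; g)`, multiplications `(g, h; gh)` and units `(∅; e)`, under
tensor products, compositions (with matching decorations) and adjoints. -/
inductive GenDec (Γ : Type*) [Group Γ] :
    ∀ {k l : ℕ}, Setoid (Pt k l) → (Fin k → Γ) → (Fin l → Γ) → Prop where
  | id (g : Γ) : GenDec Γ (⊤ : Setoid (Pt 1 1)) (fun _ => g) (fun _ => g)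
  | mult (g h : Γ) : GenDec Γ (⊤ : Setoid (Pt 2 1)) ![g, h] (fun _ => g * h)
  | unit : GenDec Γ (⊤ : Setoid (Pt 0 1)) (fun i => i.elim0) (fun _ => 1)
  | tensor {k l v w : ℕ} {p : Setoid (Pt k l)} {q : Setoid (Pt v w)}
      {g : Fin k → Γ} {h : Fin l → Γ} {g' : Fin v → Γ} {h' : Fin w → Γ} :
      GenDec Γ p g h → GenDec Γ q g' h' →
      GenDec Γ (tensorPart p q) (Fin.append g g') (Fin.append h h')
  | comp {k l w : ℕ} {p : Setoid (Pt k l)} {q : Setoid (Pt l w)}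
      {g : Fin k → Γ} {h : Fin l → Γ} {h' : Fin w → Γ} :
      GenDec Γ p g h → GenDec Γ q h h' → GenDec Γ (compPart p q) g h'
  | adj {k l : ℕ} {p : Setoid (Pt k l)} {g : Fin k → Γ} {h : Fin l → Γ} :
      GenDec Γ p g h → GenDec Γ (adjPart p) h g


section Helpers

variable {Γ : Type*} [Group Γ]

lemma fin0_eq (f g : Fin 0 → Γ) : f = g := funext fun i => i.elim0

lemma setoid_pt00_eq (p q : Setoid (Pt 0 0)) : p = q :=
  Setoid.ext fun a => a.elim (fun i => i.elim0) (fun i => i.elim0)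

lemma GenDec.congr {k l : ℕ} {p p' : Setoid (Pt k l)} {g g' : Fin k → Γ}
    {h h' : Fin l → Γ} (hp : p = p') (hg : g = g') (hh : h = h')
    (H : GenDec Γ p g h) : GenDec Γ p' g' h' := hp ▸ hg ▸ hh ▸ H

lemma eqvGen_map {α β : Type*} {r : α → α → Prop} (s : Setoid β) (F : α → β)
    (hb : ∀ a b, r a b → s.r (F a) (F b)) :
    ∀ {a b}, Relation.EqvGen r a b → s.r (F a) (F b) := by
  intro a b h
  induction h with
  | rel a b h => exact hb a b h
  | refl a => exact s.refl' _
  | symm a b _ ih => exact s.symm' ih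
  | trans a b c _ _ ih1 ih2 => exact s.trans' ih1 ih2

lemma jointSetoid_rel {k l w : ℕ} (p : Setoid (Pt k l)) (q : Setoid (Pt l w))
    (x y : X3 k l w) :
    (jointSetoid p q).r x y ↔ Relation.EqvGen (fun x y =>
      (∃ a b, p.r a b ∧ x = upEmb a ∧ y = upEmb b) ∨
      (∃ a b, q.r a b ∧ x = loEmb a ∧ y = loEmb b)) x y := Iff.rfl

lemma compPart_rel {k l w : ℕ} (p : Setoid (Pt k l)) (q : Setoid (Pt l w))
    (x y : Pt k w) :
    (compPart p q).r x y ↔ (jointSetoid p q).r (outEmb x) (outEmb y) := Iff.rfl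

lemma joint_up {k l w : ℕ} (p : Setoid (Pt k l)) (q : Setoid (Pt l w))
    {a b : Pt k l} (h : p.r a b) : (jointSetoid p q).r (upEmb a) (upEmb b) :=
  Relation.EqvGen.rel _ _ (Or.inl ⟨a, b, h, rfl, rfl⟩)

lemma joint_lo {k l w : ℕ} (p : Setoid (Pt k l)) (q : Setoid (Pt l w))
    {a b : Pt l w} (h : q.r a b) : (jointSetoid p q).r (loEmb a) (loEmb b) :=
  Relation.EqvGen.rel _ _ (Or.inr ⟨a, b, h, rfl, rfl⟩)

/-- The identity partition pairing the `i`-th upper and lower points. -/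
def idP (n : ℕ) : Setoid (Pt n n) := Setoid.ker (Sum.elim Fin.val Fin.val)

lemma idP_rel {n : ℕ} (x y : Pt n n) :
    (idP n).r x y ↔ Sum.elim Fin.val Fin.val x = Sum.elim Fin.val Fin.val y := Iff.rfl


lemma top_rel {α : Type*} (x y : α) : (⊤ : Setoid α).r x y := trivial

lemma adjPart_top {k l : ℕ} : adjPart (⊤ : Setoid (Pt k l)) = (⊤ : Setoid (Pt l k)) :=
  Setoid.ext fun _ _ => Iff.rfl

lemma comp_top_top {k l w : ℕ} (hl : 0 < l) :
    compPart (⊤ : Setoid (Pt k l)) (⊤ : Setoid (Pt l w)) = (⊤ : Setoid (Pt k w)) := by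
  apply Setoid.ext
  intro x y
  constructor
  · intro _; exact trivial
  · intro _
    show (jointSetoid _ _).r (outEmb x) (outEmb y)
    have key : ∀ z : Pt k w, (jointSetoid (⊤ : Setoid (Pt k l)) (⊤ : Setoid (Pt l w))).r
        (outEmb z) (Sum.inr (Sum.inl ⟨0, hl⟩)) := by
      intro z
      rcases z with i | j
      · exact joint_up _ _ (a := Sum.inl i) (b := Sum.inr ⟨0, hl⟩) trivial
      · exact ((jointSetoid _ _).symm'
          (joint_lo _ _ (a := Sum.inl ⟨0, hl⟩) (b := Sum.inr j) trivial))
    exact (jointSetoid _ _).trans' (key x) ((jointSetoid _ _).symm' (key y))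

lemma gen_empty (p : Setoid (Pt 0 0)) (g : Fin 0 → Γ) (h : Fin 0 → Γ) :
    GenDec Γ p g h := by
  have H := GenDec.comp (GenDec.unit (Γ := Γ)) (GenDec.adj (GenDec.unit (Γ := Γ)))
  exact H.congr (setoid_pt00_eq _ _) (fin0_eq _ _) (fin0_eq _ _)

lemma tensor_idP (n : ℕ) :
    tensorPart (idP n) (⊤ : Setoid (Pt 1 1)) = idP (n + 1) := by
  apply Setoid.ext
  intro x y
  constructor
  · intro hrel
    refine eqvGen_map (idP (n+1)) id ?_ hrel
    rintro a b (⟨u, v, huv, rfl, rfl⟩ | ⟨u, v, _, rfl, rfl⟩)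
    · rcases u with i | i <;> rcases v with j | j <;>
        simpa [idP_rel, tleft] using huv
    · rcases u with i | i <;> rcases v with j | j <;>
        simp [idP_rel, tright, Fin.val_eq_zero]
  · intro hrel
    have hval : Sum.elim Fin.val Fin.val x = Sum.elim Fin.val Fin.val y := hrel
    have base : ∀ (i : Fin (n+1)) (j : Fin (n+1)), (i : ℕ) = (j : ℕ) →
        (tensorPart (idP n) (⊤ : Setoid (Pt 1 1))).r (Sum.inl i) (Sum.inr j) := by
      intro i j hij
      by_cases hv : (i : ℕ) < n
      · refine Relation.EqvGen.rel _ _ (Or.inl ⟨Sum.inl ⟨i, hv⟩, Sum.inr ⟨j, by omega⟩,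
          ?_, ?_, ?_⟩)
        · exact hij
        · show Sum.inl i = Sum.inl (Fin.castAdd 1 _); exact congrArg _ (Fin.ext rfl)
        · show Sum.inr j = Sum.inr (Fin.castAdd 1 _); exact congrArg _ (Fin.ext rfl)
      · refine Relation.EqvGen.rel _ _ (Or.inr ⟨Sum.inl 0, Sum.inr 0, trivial, ?_, ?_⟩)
        · show Sum.inl i = Sum.inl (Fin.natAdd n _)
          exact congrArg _ (Fin.ext (by simp; omega))
        · show Sum.inr j = Sum.inr (Fin.natAdd n _)
          exact congrArg _ (Fin.ext (by simp; omega))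
    rcases x with i | i <;> rcases y with j | j
    · obtain rfl : i = j := Fin.ext (by simpa using hval)
      exact Relation.EqvGen.refl _
    · exact base i j (by simpa using hval)
    · exact Relation.EqvGen.symm _ _ (base j i (by simpa using hval.symm))
    · obtain rfl : i = j := Fin.ext (by simpa using hval)
      exact Relation.EqvGen.refl _

lemma append_castSucc_last {n : ℕ} (g : Fin (n + 1) → Γ) :
    Fin.append (fun i : Fin n => g i.castSucc) (fun _ : Fin 1 => g (Fin.last n)) = g := by
  funext i
  refine Fin.lastCases ?_ ?_ i
  · have h : Fin.last n = Fin.natAdd n (0 : Fin 1) := Fin.ext (by simp)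
    rw [h, Fin.append_right]
  · intro i
    have h : i.castSucc = Fin.castAdd 1 i := rfl
    rw [h, Fin.append_left]
    rfl

lemma gen_id : ∀ (n : ℕ) (g : Fin n → Γ), GenDec Γ (idP n) g g := by
  intro n
  induction n with
  | zero => intro g; exact gen_empty _ _ _
  | succ n ih =>
    intro g
    have H := GenDec.tensor (ih (fun i => g i.castSucc)) (GenDec.id (g (Fin.last n)))
    exact H.congr (tensor_idP n) (append_castSucc_last g) (append_castSucc_last g)

lemma gen_cap (c : Γ) :
    GenDec Γ (⊤ : Setoid (Pt 2 0)) ![c, c⁻¹] (fun i => i.elim0) := by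
  have A := (GenDec.adj (GenDec.unit (Γ := Γ))).congr rfl
    (funext fun _ : Fin 1 => (mul_inv_cancel c).symm) rfl
  have H := GenDec.comp (GenDec.mult c c⁻¹) A
  have hp : compPart (⊤ : Setoid (Pt 2 1)) (adjPart (⊤ : Setoid (Pt 0 1)))
      = (⊤ : Setoid (Pt 2 0)) := by
    rw [adjPart_top]; exact comp_top_top one_pos
  exact H.congr hp rfl (fin0_eq _ _)


lemma append_pair (a b : Γ) :
    Fin.append (fun _ : Fin 1 => a) (fun _ : Fin 1 => b) = ![a, b] := by
  funext i
  refine Fin.addCases (fun j => ?_) (fun j => ?_) i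
  · rw [Fin.append_left]
    have hj : Fin.castAdd 1 j = (0 : Fin 2) := by
      apply Fin.ext; simp
    rw [hj]; rfl
  · rw [Fin.append_right]
    have hj : Fin.natAdd 1 j = (1 : Fin 2) := by
      apply Fin.ext; simp
    rw [hj]; rfl

lemma comp_fork (u v : ℕ) :
    compPart (adjPart (⊤ : Setoid (Pt 2 1)))
      (tensorPart (⊤ : Setoid (Pt 1 u)) (⊤ : Setoid (Pt 1 v)))
      = (⊤ : Setoid (Pt 1 (u + v))) := by
  apply Setoid.ext
  intro x y
  constructor
  · intro _; exact trivial
  · intro _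
    show (jointSetoid (adjPart (⊤ : Setoid (Pt 2 1)))
      (tensorPart (⊤ : Setoid (Pt 1 u)) (⊤ : Setoid (Pt 1 v)))).r (outEmb x) (outEmb y)
    set J := jointSetoid (adjPart (⊤ : Setoid (Pt 2 1)))
      (tensorPart (⊤ : Setoid (Pt 1 u)) (⊤ : Setoid (Pt 1 v))) with hJ
    have key : ∀ z : Pt 1 (u + v), J.r (outEmb z) (Sum.inr (Sum.inl (0 : Fin 2))) := by
      intro z
      rcases z with i | j
      · exact joint_up _ _ (a := Sum.inl i) (b := Sum.inr 0) trivial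
      · by_cases hj : (j : ℕ) < u
        · have hq : (tensorPart (⊤ : Setoid (Pt 1 u)) (⊤ : Setoid (Pt 1 v))).r
              (Sum.inl (Fin.castAdd 1 (0 : Fin 1))) (Sum.inr j) := by
            refine Relation.EqvGen.rel _ _ (Or.inl ⟨Sum.inl 0, Sum.inr ⟨j, hj⟩,
              trivial, rfl, ?_⟩)
            show Sum.inr j = Sum.inr (Fin.castAdd v ⟨j, hj⟩)
            exact congrArg _ (Fin.ext rfl)
          have h1 : J.r (loEmb (Sum.inl (Fin.castAdd 1 (0 : Fin 1)))) (loEmb (Sum.inr j)) :=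
            joint_lo _ _ hq
          have h2 : loEmb (k := 1) (w := u + v) (Sum.inl (Fin.castAdd 1 (0 : Fin 1)))
              = Sum.inr (Sum.inl (0 : Fin 2)) := by
            show Sum.inr (Sum.inl _) = Sum.inr (Sum.inl _)
            exact congrArg _ (congrArg _ (Fin.ext rfl))
          rw [h2] at h1
          exact J.symm' h1
        · have hq : (tensorPart (⊤ : Setoid (Pt 1 u)) (⊤ : Setoid (Pt 1 v))).r
              (Sum.inl (Fin.natAdd 1 (0 : Fin 1))) (Sum.inr j) := by
            refine Relation.EqvGen.rel _ _ (Or.inr ⟨Sum.inl 0, Sum.inr ⟨(j : ℕ) - u, by omega⟩,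
              trivial, rfl, ?_⟩)
            show Sum.inr j = Sum.inr (Fin.natAdd u ⟨(j : ℕ) - u, _⟩)
            refine congrArg _ (Fin.ext ?_)
            show (j : ℕ) = u + ((j : ℕ) - u)
            omega
          have h1 : J.r (loEmb (Sum.inl (Fin.natAdd 1 (0 : Fin 1)))) (loEmb (Sum.inr j)) :=
            joint_lo _ _ hq
          have h2 : loEmb (k := 1) (w := u + v) (Sum.inl (Fin.natAdd 1 (0 : Fin 1)))
              = Sum.inr (Sum.inl (1 : Fin 2)) := by
            show Sum.inr (Sum.inl _) = Sum.inr (Sum.inl _)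
            exact congrArg _ (congrArg _ (Fin.ext rfl))
          rw [h2] at h1
          have h3 : J.r ((Sum.inr (Sum.inl (1 : Fin 2)))) (Sum.inr (Sum.inl (0 : Fin 2))) :=
            joint_up _ _ (a := Sum.inr 1) (b := Sum.inr 0) trivial
          exact J.trans' (J.symm' h1) h3
    exact J.trans' (key x) (J.symm' (key y))

lemma gen_spine : ∀ (m : ℕ) (h : Fin (m + 1) → Γ),
    GenDec Γ (⊤ : Setoid (Pt 1 (m + 1))) (fun _ => (List.ofFn h).prod) h := by
  intro m
  induction m with
  | zero =>
    intro h
    refine (GenDec.id (h 0)).congr rfl ?_ ?_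
    · funext _; simp
    · funext i
      exact congrArg h (Fin.ext (by omega)).symm
  | succ m ih =>
    intro h
    have T := GenDec.tensor (ih (fun j => h j.castSucc)) (GenDec.id (h (Fin.last (m + 1))))
    have A := (GenDec.adj (GenDec.mult ((List.ofFn fun j : Fin (m+1) => h j.castSucc).prod)
        (h (Fin.last (m + 1))))).congr rfl rfl (append_pair _ _).symm
    have H := GenDec.comp A T
    refine H.congr (comp_fork (m + 1) 1) ?_ ?_
    · funext _
      conv_rhs => rw [List.ofFn_succ' h]
      rw [List.concat_eq_append, List.prod_append, List.prod_cons, List.prod_nil, mul_one]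
    · exact append_castSucc_last h

lemma gen_block (m : ℕ) (hm : 0 < m) (h : Fin m → Γ) (hh : (List.ofFn h).prod = 1)
    (g : Fin 0 → Γ) : GenDec Γ (⊤ : Setoid (Pt 0 m)) g h := by
  obtain ⟨m', rfl⟩ : ∃ m', m = m' + 1 := ⟨m - 1, by omega⟩
  have S := (gen_spine m' h).congr rfl (by rw [hh]) rfl
  have H := GenDec.comp (GenDec.unit (Γ := Γ)) S
  exact H.congr (comp_top_top one_pos) (fin0_eq _ _) rfl


lemma sorted_eq_of_mem_iff {α : Type*} [LinearOrder α] :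
    ∀ {l₁ l₂ : List α}, l₁.Pairwise (· < ·) → l₂.Pairwise (· < ·) →
      (∀ x, x ∈ l₁ ↔ x ∈ l₂) → l₁ = l₂ := by
  intro l₁
  induction l₁ with
  | nil =>
    intro l₂ _ _ hm
    cases l₂ with
    | nil => rfl
    | cons b t => exact absurd ((hm b).mpr (List.mem_cons_self)) List.not_mem_nil
  | cons a t ih =>
    intro l₂ h₁ h₂ hm
    cases l₂ with
    | nil => exact absurd ((hm a).mp (List.mem_cons_self)) List.not_mem_nil
    | cons b t₂ =>
      have ha := (hm a).mp (List.mem_cons_self)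
      have hb := (hm b).mpr (List.mem_cons_self)
      have hab : a = b := by
        rcases List.mem_cons.mp ha with h | h
        · exact h
        · rcases List.mem_cons.mp hb with h' | h'
          · exact h'.symm
          · exact absurd (List.rel_of_pairwise_cons h₂ h)
              (not_lt.mpr (le_of_lt (List.rel_of_pairwise_cons h₁ h')))
      subst hab
      have ht : ∀ x, x ∈ t ↔ x ∈ t₂ := by
        intro x
        constructor
        · intro hx
          have hax : a < x := List.rel_of_pairwise_cons h₁ hx
          rcases List.mem_cons.mp ((hm x).mp (List.mem_cons_of_mem _ hx)) with h | h
          · exact absurd h (ne_of_gt hax)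
          · exact h
        · intro hx
          have hax : a < x := List.rel_of_pairwise_cons h₂ hx
          rcases List.mem_cons.mp ((hm x).mpr (List.mem_cons_of_mem _ hx)) with h | h
          · exact absurd h (ne_of_gt hax)
          · exact h
      rw [ih (List.Pairwise.of_cons h₁) (List.Pairwise.of_cons h₂) ht]

lemma filter_map_mono {n n' : ℕ} (f : Fin n → Fin n') (hf : StrictMono f)
    (P : Fin n' → Prop) [DecidablePred P] (hP : ∀ x, P x → ∃ i, f i = x) :
    (List.finRange n').filter (fun x => decide (P x))
      = ((List.finRange n).filter (fun i => decide (P (f i)))).map f := by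
  apply sorted_eq_of_mem_iff
  · exact (List.pairwise_lt_finRange n').filter _
  · exact ((List.pairwise_lt_finRange n).filter _).map f (fun _ _ h => hf h)
  · intro x
    simp only [List.mem_filter, List.mem_map, List.mem_finRange, true_and,
      decide_eq_true_eq]
    constructor
    · intro hx
      obtain ⟨i, rfl⟩ := hP x hx
      exact ⟨i, ⟨hx, rfl⟩⟩
    · rintro ⟨i, hi, rfl⟩
      exact hi

lemma finRange_succ_last (n : ℕ) :
    List.finRange (n + 1) = (List.finRange n).map Fin.castSucc ++ [Fin.last n] := by
  apply sorted_eq_of_mem_iff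
  · exact List.pairwise_lt_finRange (n + 1)
  · rw [List.pairwise_append]
    refine ⟨((List.pairwise_lt_finRange n).map _ (fun _ _ h => ?_)), List.pairwise_singleton _ _, ?_⟩
    · exact Fin.castSucc_lt_castSucc_iff.mpr h
    · intro x hx y hy
      rw [List.mem_singleton] at hy
      obtain ⟨i, _, rfl⟩ := List.mem_map.mp hx
      subst hy
      exact Fin.castSucc_lt_last i
  · intro x
    simp only [List.mem_finRange, true_iff, List.mem_append, List.mem_map, List.mem_singleton]
    refine Fin.lastCases ?_ ?_ x
    · exact Or.inr rfl
    · intro i; exact Or.inl ⟨i, trivial, rfl⟩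


/-- Reindexing of the lower row that skips the interval `[a, a+m)`. -/
def fm (a m b : ℕ) : Fin (a + b) → Fin ((a + m) + b) := fun j =>
  if (j : ℕ) < a then ⟨j, by omega⟩ else ⟨(j : ℕ) + m, by omega⟩

lemma fm_val_lt {a m b : ℕ} {j : Fin (a + b)} (h : (j : ℕ) < a) :
    ((fm a m b j : Fin ((a + m) + b)) : ℕ) = (j : ℕ) := by
  simp [fm, h]

lemma fm_val_ge {a m b : ℕ} {j : Fin (a + b)} (h : a ≤ (j : ℕ)) :
    ((fm a m b j : Fin ((a + m) + b)) : ℕ) = (j : ℕ) + m := by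
  simp [fm, Nat.not_lt.mpr h]

lemma fm_strictMono {a m b : ℕ} : StrictMono (fm a m b) := by
  intro x y hxy
  have hv : (x : ℕ) < (y : ℕ) := hxy
  show (fm a m b x : ℕ) < (fm a m b y : ℕ)
  rcases Nat.lt_or_ge (x : ℕ) a with hx | hx <;> rcases Nat.lt_or_ge (y : ℕ) a with hy | hy
  · rw [fm_val_lt hx, fm_val_lt hy]; omega
  · rw [fm_val_lt hx, fm_val_ge hy]; omega
  · omega
  · rw [fm_val_ge hx, fm_val_ge hy]; omega

lemma peel_eq (a m b : ℕ) (hm : 0 < m) (p : Setoid (Pt 0 ((a + m) + b)))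
    (hB : ∀ j : Fin ((a + m) + b), p.r (Sum.inr j) (Sum.inr ⟨a, by omega⟩) ↔
      (a ≤ (j : ℕ) ∧ (j : ℕ) < a + m)) :
    compPart (Setoid.comap (Sum.map id (fm a m b)) p)
      (tensorPart (tensorPart (idP a) (⊤ : Setoid (Pt 0 m))) (idP b)) = p := by
  set ctr : Pt 0 ((a + m) + b) := Sum.inr ⟨a, by omega⟩ with hctr
  set Q := tensorPart (tensorPart (idP a) (⊤ : Setoid (Pt 0 m))) (idP b) with hQdef
  set p' := Setoid.comap (Sum.map (@id (Fin 0)) (fm a m b)) p with hp'def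
  set π : X3 0 (a + b) ((a + m) + b) → Pt 0 ((a + m) + b) :=
    Sum.elim (fun i => i.elim0)
      (Sum.elim (fun j => Sum.inr (fm a m b j)) (fun j => Sum.inr j)) with hπ
  apply Setoid.ext
  intro x y
  constructor
  · intro hxy
    have key : ∀ u v, (jointSetoid p' Q).r u v → p.r (π u) (π v) := by
      intro u v huv
      refine eqvGen_map p π ?_ huv
      rintro u v (⟨c, d, hcd, rfl, rfl⟩ | ⟨c, d, hcd, rfl, rfl⟩)
      · -- upper generators: pairs from `p'`
        rcases c with i | jc
        · exact i.elim0
        rcases d with i | jd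
        · exact i.elim0
        exact hcd
      · -- lower generators: pairs from `Q`
        refine eqvGen_map p (fun z => π (loEmb z)) ?_ hcd
        rintro u v (⟨c', d', hin, rfl, rfl⟩ | ⟨c', d', hin, rfl, rfl⟩)
        · -- left factor of outer tensor
          refine eqvGen_map p (fun z => π (loEmb (tleft z))) ?_ hin
          rintro u v (⟨e, f, hee, rfl, rfl⟩ | ⟨e, f, hee, rfl, rfl⟩)
          · -- identity strands on the first `a` points
            beta_reduce
            have hval : Sum.elim Fin.val Fin.val e = Sum.elim Fin.val Fin.val f := hee
            have hpt : ∀ z : Pt a a,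
                π (loEmb (tleft (v := b) (w := b) (tleft (v := 0) (w := m) z)))
                = Sum.inr (⟨Sum.elim Fin.val Fin.val z, by
                    rcases z with i | i <;> simp <;> omega⟩ : Fin ((a + m) + b)) := by
              rintro (i | i)
              · show Sum.inr (fm a m b _) = _
                refine congrArg _ (Fin.ext ?_)
                rw [fm_val_lt (by simp)]
                simp only [Fin.coe_castAdd, Sum.elim_inl]
              · show Sum.inr _ = Sum.inr _
                refine congrArg _ (Fin.ext ?_)
                simp only [Fin.coe_castAdd, Sum.elim_inr]
            have heq : π (loEmb (tleft (v := b) (w := b) (tleft (v := 0) (w := m) e)))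
                = π (loEmb (tleft (v := b) (w := b) (tleft (v := 0) (w := m) f))) := by
              rw [hpt e, hpt f]
              exact congrArg Sum.inr (Fin.ext hval)
            rw [heq]
          · -- the interior block
            beta_reduce
            rcases e with i | te
            · exact i.elim0
            rcases f with i | tf
            · exact i.elim0
            have h1 : p.r (π (loEmb (tleft (v := b) (w := b)
                (tright (k := a) (l := a) (v := 0) (Sum.inr te))))) ctr := by
              refine (hB _).mpr ?_
              constructor <;> simp <;> omega
            have h2 : p.r (π (loEmb (tleft (v := b) (w := b)
                (tright (k := a) (l := a) (v := 0) (Sum.inr tf))))) ctr := by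
              refine (hB _).mpr ?_
              constructor <;> simp <;> omega
            exact p.trans' h1 (p.symm' h2)
        · -- right factor of outer tensor : identity strands on the last `b` points
          beta_reduce
          have hval : Sum.elim Fin.val Fin.val c' = Sum.elim Fin.val Fin.val d' := hin
          have hpt : ∀ z : Pt b b, π (loEmb (tright z))
              = Sum.inr (⟨(a + m) + Sum.elim Fin.val Fin.val z, by
                  rcases z with i | i <;> simp <;> omega⟩ : Fin ((a + m) + b)) := by
            rintro (i | i)
            · show Sum.inr (fm a m b _) = _
              refine congrArg _ (Fin.ext ?_)
              rw [fm_val_ge (by simp only [Fin.coe_natAdd, Fin.coe_castAdd]; omega)]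
              simp only [Fin.coe_natAdd, Fin.coe_castAdd, Sum.elim_inl]
              omega
            · show Sum.inr _ = Sum.inr _
              refine congrArg _ (Fin.ext ?_)
              simp only [Fin.coe_natAdd, Sum.elim_inr]
          have heq : π (loEmb (tright c')) = π (loEmb (tright d')) := by
            rw [hpt c', hpt d']
            exact congrArg Sum.inr (Fin.ext (show a + m + Sum.elim Fin.val Fin.val c'
              = a + m + Sum.elim Fin.val Fin.val d' by rw [hval]))
          rw [heq]
    have := key _ _ hxy
    rcases x with i | jx
    · exact i.elim0
    rcases y with i | jy
    · exact i.elim0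
    exact this
  · intro hxy
    rcases x with i | jx
    · exact i.elim0
    rcases y with i | jy
    · exact i.elim0
    set J := jointSetoid p' Q with hJ
    by_cases hxB : a ≤ (jx : ℕ) ∧ (jx : ℕ) < a + m
    · -- both points lie in the interval block
      have hyB : a ≤ (jy : ℕ) ∧ (jy : ℕ) < a + m := by
        refine (hB jy).mp (p.trans' (p.symm' hxy) ((hB jx).mpr hxB))
      have hq : Q.r (Sum.inr jx) (Sum.inr jy) := by
        refine Relation.EqvGen.rel _ _ (Or.inl ⟨Sum.inr (Fin.natAdd a ⟨(jx : ℕ) - a, by omega⟩),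
          Sum.inr (Fin.natAdd a ⟨(jy : ℕ) - a, by omega⟩),
          Relation.EqvGen.rel _ _ (Or.inr ⟨Sum.inr ⟨(jx : ℕ) - a, by omega⟩,
            Sum.inr ⟨(jy : ℕ) - a, by omega⟩, trivial, rfl, rfl⟩), ?_, ?_⟩)
        · show Sum.inr jx = Sum.inr (Fin.castAdd b _)
          refine congrArg _ (Fin.ext ?_)
          show (jx : ℕ) = a + ((jx : ℕ) - a)
          omega
        · show Sum.inr jy = Sum.inr (Fin.castAdd b _)
          refine congrArg _ (Fin.ext ?_)
          show (jy : ℕ) = a + ((jy : ℕ) - a)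
          omega
      exact joint_lo p' Q hq
    · -- neither point lies in the interval block
      have hyB : ¬ (a ≤ (jy : ℕ) ∧ (jy : ℕ) < a + m) := by
        intro hyB
        exact hxB ((hB jx).mp (p.trans' hxy ((hB jy).mpr hyB)))
      -- the preimages under `fm`
      have hpre : ∀ (j : Fin ((a + m) + b)), ¬ (a ≤ (j : ℕ) ∧ (j : ℕ) < a + m) →
          ∃ jj : Fin (a + b), fm a m b jj = j := by
        intro j hj
        by_cases hlt : (j : ℕ) < a
        · exact ⟨⟨j, by omega⟩, Fin.ext (by rw [fm_val_lt (by simpa using hlt)])⟩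
        · refine ⟨⟨(j : ℕ) - m, by omega⟩, Fin.ext ?_⟩
          rw [fm_val_ge (by simp; omega)]
          simp; omega
      obtain ⟨jjx, hjjx⟩ := hpre jx hxB
      obtain ⟨jjy, hjjy⟩ := hpre jy hyB
      -- chain each outer point to the corresponding middle point
      have hchain : ∀ (j : Fin ((a + m) + b)) (jj : Fin (a + b)), fm a m b jj = j →
          J.r (outEmb (Sum.inr j)) (upEmb (Sum.inr jj)) := by
        intro j jj hjj
        have hq : Q.r (Sum.inl ⟨(jj : ℕ), by omega⟩) (Sum.inr j) := by
          by_cases hlt : (jj : ℕ) < a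
          · refine Relation.EqvGen.rel _ _ (Or.inl ⟨Sum.inl (Fin.castAdd 0 ⟨(jj : ℕ), hlt⟩),
              Sum.inr (Fin.castAdd m ⟨(jj : ℕ), hlt⟩),
              Relation.EqvGen.rel _ _ (Or.inl ⟨Sum.inl ⟨(jj : ℕ), hlt⟩,
                Sum.inr ⟨(jj : ℕ), hlt⟩, rfl, rfl, rfl⟩), ?_, ?_⟩)
            · show Sum.inl _ = Sum.inl (Fin.castAdd b _)
              exact congrArg _ (Fin.ext (by simp))
            · show Sum.inr j = Sum.inr (Fin.castAdd b _)
              refine congrArg _ (Fin.ext ?_)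
              rw [← hjj, fm_val_lt hlt]
              simp
          · refine Relation.EqvGen.rel _ _ (Or.inr ⟨Sum.inl ⟨(jj : ℕ) - a, by omega⟩,
              Sum.inr ⟨(jj : ℕ) - a, by omega⟩, ?_, ?_, ?_⟩)
            · show Sum.elim Fin.val Fin.val
                (Sum.inl (⟨(jj : ℕ) - a, by omega⟩ : Fin b)) = _
              simp
            · show Sum.inl _ = Sum.inl (Fin.natAdd (a + 0) _)
              refine congrArg _ (Fin.ext ?_)
              show (jj : ℕ) = (a + 0) + ((jj : ℕ) - a)
              omega
            · show Sum.inr j = Sum.inr (Fin.natAdd (a + m) _)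
              refine congrArg _ (Fin.ext ?_)
              rw [← hjj, fm_val_ge (by omega)]
              show (jj : ℕ) + m = (a + m) + ((jj : ℕ) - a)
              omega
        have h1 : J.r (loEmb (Sum.inl ⟨(jj : ℕ), by omega⟩)) (loEmb (Sum.inr j)) :=
          joint_lo p' Q hq
        have h2 : loEmb (k := 0) (Sum.inl (⟨(jj : ℕ), by omega⟩ : Fin (a + b)))
            = upEmb (w := (a + m) + b) (Sum.inr jj) := by
          show Sum.inr (Sum.inl _) = Sum.inr (Sum.inl _)
          exact congrArg _ (congrArg _ (Fin.ext rfl))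
        rw [h2] at h1
        exact J.symm' h1
      have hup : J.r (upEmb (Sum.inr jjx)) (upEmb (Sum.inr jjy)) := by
        refine joint_up p' Q ?_
        show p.r (Sum.map id (fm a m b) (Sum.inr jjx)) (Sum.map id (fm a m b) (Sum.inr jjy))
        show p.r (Sum.inr (fm a m b jjx)) (Sum.inr (fm a m b jjy))
        rw [hjjx, hjjy]
        exact hxy
      exact J.trans' (hchain jx jjx hjjx) (J.trans' hup (J.symm' (hchain jy jjy hjjy)))


/-- Rotation sending a point of the `(k, l+1)` diagram to the `(k+1, l)` diagram:
the extra lower-right point goes to the upper-right position. -/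
def rho (k l : ℕ) : Pt k (l + 1) → Pt (k + 1) l := fun z =>
  match z with
  | Sum.inl i => Sum.inl i.castSucc
  | Sum.inr j => if h : (j : ℕ) < l then Sum.inr ⟨j, h⟩ else Sum.inl (Fin.last k)

def rhoInv (k l : ℕ) : Pt (k + 1) l → Pt k (l + 1) := fun z =>
  match z with
  | Sum.inl i => if h : (i : ℕ) < k then Sum.inl ⟨i, h⟩ else Sum.inr (Fin.last l)
  | Sum.inr j => Sum.inr j.castSucc

lemma rho_rhoInv {k l : ℕ} (z : Pt (k + 1) l) : rho k l (rhoInv k l z) = z := by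
  rcases z with i | j
  · by_cases h : (i : ℕ) < k
    · rw [rhoInv, dif_pos h]
      show Sum.inl _ = Sum.inl i
      exact congrArg _ (Fin.ext rfl)
    · rw [rhoInv, dif_neg h]
      show rho k l (Sum.inr (Fin.last l)) = Sum.inl i
      rw [rho]
      have : ¬ ((Fin.last l : Fin (l + 1)) : ℕ) < l := by simp
      rw [dif_neg this]
      exact congrArg _ (Fin.ext (by simp; omega))
  · show rho k l (Sum.inr j.castSucc) = Sum.inr j
    rw [rho]
    have h : ((j.castSucc : Fin (l + 1)) : ℕ) < l := by simp
    rw [dif_pos h]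
    exact congrArg _ (Fin.ext rfl)

lemma ptIdx_rho {k l : ℕ} (z : Pt k (l + 1)) : ptIdx (rho k l z) = ptIdx z := by
  rcases z with i | j
  · simp [rho, ptIdx]
  · by_cases h : (j : ℕ) < l
    · rw [rho]; rw [dif_pos h]
      show (k + 1) + (l - 1 - (j : ℕ)) = k + ((l + 1) - 1 - (j : ℕ))
      omega
    · rw [rho, dif_neg h]
      have hj : (j : ℕ) = l := by omega
      simp [ptIdx, hj]

lemma rot_eq (k l : ℕ) (p : Setoid (Pt (k + 1) l)) :
    compPart (tensorPart (Setoid.comap (rho k l) p) (⊤ : Setoid (Pt 1 1)))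
      ((tensorPart (idP l) (⊤ : Setoid (Pt 2 0))) : Setoid (Pt (l + 2) (l + 0))) = p := by
  set pr := Setoid.comap (rho k l) p with hpr
  set T := tensorPart pr (⊤ : Setoid (Pt 1 1)) with hT
  set Q : Setoid (Pt (l + 2) (l + 0)) := tensorPart (idP l) (⊤ : Setoid (Pt 2 0)) with hQ
  set J := jointSetoid T Q with hJ
  set π : X3 (k + 1) ((l + 1) + 1) l → Pt (k + 1) l :=
    Sum.elim (fun i => Sum.inl i)
      (Sum.elim (fun j => if h : (j : ℕ) < l then Sum.inr ⟨j, h⟩ else Sum.inl (Fin.last k))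
        (fun j => Sum.inr j)) with hπ
  apply Setoid.ext
  intro x y
  constructor
  · intro hxy
    have key : ∀ u v, J.r u v → p.r (π u) (π v) := by
      intro u v huv
      refine eqvGen_map p π ?_ huv
      rintro u v (⟨c, d, hcd, rfl, rfl⟩ | ⟨c, d, hcd, rfl, rfl⟩)
      · -- generators from `T`
        refine eqvGen_map p (fun z => π (upEmb z)) ?_ hcd
        rintro u v (⟨e, f, hee, rfl, rfl⟩ | ⟨e, f, hee, rfl, rfl⟩)
        · -- strands of `pr`
          beta_reduce
          have hpt : ∀ z : Pt k (l + 1),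
              π (upEmb (tleft (v := 1) (w := 1) z)) = rho k l z := by
            rintro (i | j)
            · rfl
            · show (if h : ((Fin.castAdd 1 j : Fin ((l+1)+1)) : ℕ) < l
                  then (Sum.inr ⟨((Fin.castAdd 1 j : Fin ((l+1)+1)) : ℕ), h⟩ : Pt (k+1) l)
                  else Sum.inl (Fin.last k)) = rho k l (Sum.inr j)
              rw [rho]
              by_cases h : (j : ℕ) < l
              · rw [dif_pos (by simpa using h), dif_pos h]
                exact congrArg _ (Fin.ext rfl)
              · rw [dif_neg (by simpa using h), dif_neg h]
          rw [hpt e, hpt f]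
          exact hee
        · -- the strand carrying the rotated point
          beta_reduce
          have hpt : ∀ z : Pt 1 1,
              π (upEmb (tright (k := k) (l := l + 1) z)) = Sum.inl (Fin.last k) := by
            rintro (i | j)
            · show Sum.inl (Fin.natAdd k i) = _
              exact congrArg _ (Fin.ext (by simp))
            · show (if h : ((Fin.natAdd (l + 1) j : Fin ((l+1)+1)) : ℕ) < l
                  then (Sum.inr ⟨_, h⟩ : Pt (k+1) l) else Sum.inl (Fin.last k)) = _
              rw [dif_neg (by simp)]
          rw [hpt e, hpt f]
      · -- generators from `Q`
        refine eqvGen_map p (fun z => π (loEmb z)) ?_ hcd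
        rintro u v (⟨e, f, hee, rfl, rfl⟩ | ⟨e, f, hee, rfl, rfl⟩)
        · -- identity strands
          beta_reduce
          have hval : Sum.elim Fin.val Fin.val e = Sum.elim Fin.val Fin.val f := hee
          have hpt : ∀ z : Pt l l, π (loEmb (tleft (v := 2) (w := 0) z))
              = Sum.inr (⟨Sum.elim Fin.val Fin.val z, by
                  rcases z with i | i <;> simp⟩ : Fin l) := by
            rintro (i | i)
            · show (if h : ((Fin.castAdd 2 i : Fin (l + 2)) : ℕ) < l
                  then (Sum.inr ⟨_, h⟩ : Pt (k+1) l) else Sum.inl (Fin.last k)) = _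
              rw [dif_pos (by simpa using i.isLt)]
              exact congrArg _ (Fin.ext rfl)
            · show Sum.inr (Fin.castAdd 0 i) = _
              exact congrArg _ (Fin.ext (by simp))
          have heq : π (loEmb (tleft (v := 2) (w := 0) e))
              = π (loEmb (tleft (v := 2) (w := 0) f)) := by
            rw [hpt e, hpt f]
            exact congrArg Sum.inr (Fin.ext hval)
          rw [heq]
        · -- the cap
          beta_reduce
          have hpt : ∀ z : Pt 2 0, π (loEmb (tright (k := l) (l := l) z))
              = Sum.inl (Fin.last k) := by
            rintro (i | i)
            · show (if h : ((Fin.natAdd l i : Fin (l + 2)) : ℕ) < l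
                  then (Sum.inr ⟨_, h⟩ : Pt (k+1) l) else Sum.inl (Fin.last k)) = _
              rw [dif_neg (by simp)]
            · exact i.elim0
          rw [hpt e, hpt f]
    have := key _ _ hxy
    rcases x with i | jx <;> rcases y with i' | jy <;> exact this
  · intro hxy
    have hA : ∀ z : Pt (k + 1) l,
        J.r (outEmb z) (upEmb (tleft (v := 1) (w := 1) (rhoInv k l z))) := by
      intro z
      rcases z with i | j
      · by_cases h : (i : ℕ) < k
        · have hz : upEmb (w := l) (tleft (v := 1) (w := 1) (rhoInv k l (Sum.inl i)))
              = outEmb (k := k + 1) (l := (l+1)+1) (Sum.inl i) := by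
            rw [rhoInv, dif_pos h]
            show Sum.inl _ = Sum.inl i
            exact congrArg _ (Fin.ext rfl)
          rw [hz]
        · -- the rotated point
          have h1 : T.r (tright (k := k) (l := l + 1) (Sum.inl (0 : Fin 1)))
              (tright (k := k) (l := l + 1) (Sum.inr (0 : Fin 1))) :=
            Relation.EqvGen.rel _ _ (Or.inr ⟨Sum.inl 0, Sum.inr 0, trivial, rfl, rfl⟩)
          have s1 : J.r (upEmb (tright (k := k) (l := l + 1) (Sum.inl (0 : Fin 1))))
              (upEmb (tright (k := k) (l := l + 1) (Sum.inr (0 : Fin 1)))) :=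
            joint_up _ _ h1
          have e1 : upEmb (w := l) (tright (k := k) (l := l + 1) (Sum.inl (0 : Fin 1)))
              = outEmb (k := k + 1) (l := (l+1)+1) (Sum.inl i) := by
            show Sum.inl _ = Sum.inl i
            exact congrArg _ (Fin.ext (by simp; omega))
          have h2 : Q.r (Sum.inl (Fin.natAdd l (0 : Fin 2)))
              (Sum.inl (Fin.natAdd l (1 : Fin 2))) :=
            Relation.EqvGen.rel _ _ (Or.inr ⟨Sum.inl 0, Sum.inl 1, trivial, rfl, rfl⟩)
          have s2 : J.r (loEmb (Sum.inl (Fin.natAdd l (0 : Fin 2))))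
              (loEmb (Sum.inl (Fin.natAdd l (1 : Fin 2)))) := joint_lo _ _ h2
          have e2 : loEmb (k := k + 1) (Sum.inl (Fin.natAdd l (1 : Fin 2)))
              = upEmb (w := l) (tright (k := k) (l := l + 1) (Sum.inr (0 : Fin 1))) := by
            show Sum.inr (Sum.inl _) = Sum.inr (Sum.inl _)
            exact congrArg _ (congrArg _ (Fin.ext (by simp)))
          have e3 : loEmb (k := k + 1) (Sum.inl (Fin.natAdd l (0 : Fin 2)))
              = upEmb (w := l) (tleft (v := 1) (w := 1) (rhoInv k l (Sum.inl i))) := by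
            rw [rhoInv, dif_neg h]
            show Sum.inr (Sum.inl _) = Sum.inr (Sum.inl _)
            exact congrArg _ (congrArg _ (Fin.ext (by simp)))
          rw [e1] at s1
          rw [e2, e3] at s2
          exact J.trans' s1 (J.symm' s2)
      · have h1 : Q.r (Sum.inl (Fin.castAdd 2 j)) (Sum.inr (Fin.castAdd 0 j)) :=
          Relation.EqvGen.rel _ _ (Or.inl ⟨Sum.inl j, Sum.inr j, rfl, rfl, rfl⟩)
        have s1 : J.r (loEmb (Sum.inl (Fin.castAdd 2 j))) (loEmb (Sum.inr (Fin.castAdd 0 j))) :=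
          joint_lo _ _ h1
        have e1 : loEmb (k := k + 1) (Sum.inr (Fin.castAdd 0 j))
            = outEmb (k := k + 1) (l := (l+1)+1) (Sum.inr j) := by
          show Sum.inr (Sum.inr _) = Sum.inr (Sum.inr _)
          exact congrArg _ (congrArg _ (Fin.ext (by simp)))
        have e2 : loEmb (k := k + 1) (Sum.inl (Fin.castAdd 2 j))
            = upEmb (w := l) (tleft (v := 1) (w := 1) (rhoInv k l (Sum.inr j))) := by
          show Sum.inr (Sum.inl _) = Sum.inr (Sum.inl _)
          exact congrArg _ (congrArg _ (Fin.ext (by simp)))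
        rw [e1, e2] at s1
        exact J.symm' s1
    have hB : J.r (upEmb (tleft (v := 1) (w := 1) (rhoInv k l x)))
        (upEmb (tleft (v := 1) (w := 1) (rhoInv k l y))) := by
      refine joint_up _ _ ?_
      refine Relation.EqvGen.rel _ _ (Or.inl ⟨rhoInv k l x, rhoInv k l y, ?_, rfl, rfl⟩)
      show p.r (rho k l (rhoInv k l x)) (rho k l (rhoInv k l y))
      rw [rho_rhoInv, rho_rhoInv]
      exact hxy
    exact J.trans' (hA x) (J.trans' hB (J.symm' (hA y)))


lemma mk_eq_mk {α : Type*} (p : Setoid α) (x y : α) :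
    Quotient.mk p x = Quotient.mk p y ↔ p.r x y :=
  ⟨Quotient.exact, Quotient.sound⟩

lemma word_fin0 (v : Fin 0 → Γ) (P : Fin 0 → Bool) :
    (((List.finRange 0).filter P).map v).prod = 1 := by
  simp

lemma word_succ_split {n : ℕ} (PB : Fin (n + 1) → Bool) (v : Fin (n + 1) → Γ) :
    (((List.finRange (n + 1)).filter PB).map v).prod
      = (((List.finRange n).filter (fun i => PB i.castSucc)).map
          (fun i => v i.castSucc)).prod
        * (if PB (Fin.last n) then v (Fin.last n) else 1) := by
  rw [finRange_succ_last, List.filter_append, List.map_append, List.prod_append]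
  congr 1
  · rw [List.filter_map, List.map_map]
    rfl
  · cases hP : PB (Fin.last n) <;> simp [hP]

lemma rot_noncrossing {k l : ℕ} (p : Setoid (Pt (k + 1) l)) (hp : Noncrossing p) :
    Noncrossing (Setoid.comap (rho k l) p) := by
  intro a b x y h1 h2 h3 r1 r2
  exact hp (rho k l a) (rho k l b) (rho k l x) (rho k l y)
    (by rw [ptIdx_rho, ptIdx_rho]; exact h1)
    (by rw [ptIdx_rho, ptIdx_rho]; exact h2)
    (by rw [ptIdx_rho, ptIdx_rho]; exact h3) r1 r2

lemma rot_decok {k l : ℕ} (p : Setoid (Pt (k + 1) l)) (g : Fin (k + 1) → Γ)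
    (h : Fin l → Γ) (hd : DecOK p g h) :
    DecOK (Setoid.comap (rho k l) p) (fun i => g i.castSucc)
      (Fin.snoc h (g (Fin.last k))⁻¹) := by
  set pr := Setoid.comap (rho k l) p with hpr
  set c : Γ := (g (Fin.last k))⁻¹ with hc
  intro cls
  obtain ⟨z0, rfl⟩ := Quotient.exists_rep cls
  have horig := hd (Quotient.mk p (rho k l z0))
  rw [wordUp, wordLo, word_succ_split] at horig
  rw [wordUp, wordLo, word_succ_split]
  have hA : (fun i : Fin k => decide
        (Quotient.mk p (Sum.inl i.castSucc) = Quotient.mk p (rho k l z0)))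
      = (fun i : Fin k => decide (Quotient.mk pr (Sum.inl i) = Quotient.mk pr z0)) := by
    funext i
    apply decide_eq_decide.mpr
    rw [mk_eq_mk, mk_eq_mk]
    exact Iff.rfl
  rw [hA] at horig
  have hrl : ∀ j : Fin l, rho k l (Sum.inr j.castSucc) = Sum.inr j := by
    intro j
    rw [rho, dif_pos (by simpa using j.isLt)]
    exact congrArg _ (Fin.ext rfl)
  have hB1 : (fun j : Fin l => decide
        (Quotient.mk pr (Sum.inr j.castSucc) = Quotient.mk pr z0))
      = (fun j : Fin l => decide (Quotient.mk p (Sum.inr j) = Quotient.mk p (rho k l z0))) := by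
    funext j
    apply decide_eq_decide.mpr
    rw [mk_eq_mk, mk_eq_mk]
    show p.r (rho k l (Sum.inr j.castSucc)) (rho k l z0) ↔ _
    rw [hrl j]
  have hB2 : (fun j : Fin l => (Fin.snoc h c : Fin (l + 1) → Γ) j.castSucc) = h := by
    funext j
    rw [Fin.snoc_castSucc]
  rw [hB1, hB2]
  have hlast : rho k l (Sum.inr (Fin.last l)) = Sum.inl (Fin.last k) := by
    rw [rho, dif_neg (by simp)]
  by_cases hmv : p.r (Sum.inl (Fin.last k)) (rho k l z0)
  · have hc1 : decide (Quotient.mk p (Sum.inl (Fin.last k))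
        = Quotient.mk p (rho k l z0)) = true :=
      decide_eq_true ((mk_eq_mk _ _ _).mpr hmv)
    have hc2 : decide (Quotient.mk pr (Sum.inr (Fin.last l))
        = Quotient.mk pr z0) = true := by
      refine decide_eq_true ((mk_eq_mk _ _ _).mpr ?_)
      show p.r (rho k l (Sum.inr (Fin.last l))) (rho k l z0)
      rw [hlast]
      exact hmv
    rw [if_pos hc1] at horig
    rw [if_pos hc2, Fin.snoc_last, ← horig, hc]
    group
  · have hc1 : ¬ (decide (Quotient.mk p (Sum.inl (Fin.last k))
        = Quotient.mk p (rho k l z0)) = true) :=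
      fun hcc => hmv ((mk_eq_mk _ _ _).mp (of_decide_eq_true hcc))
    have hc2 : ¬ (decide (Quotient.mk pr (Sum.inr (Fin.last l))
        = Quotient.mk pr z0) = true) := by
      intro hcc
      apply hmv
      have := (mk_eq_mk _ _ _).mp (of_decide_eq_true hcc)
      have h2 : p.r (rho k l (Sum.inr (Fin.last l))) (rho k l z0) := this
      rw [hlast] at h2
      exact h2
    rw [if_neg hc1, mul_one] at horig
    rw [if_neg hc2, mul_one]
    exact horig


lemma fm_preimage {a m b : ℕ} (j : Fin ((a + m) + b)) (hj : ¬ (a ≤ (j : ℕ) ∧ (j : ℕ) < a + m))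
    (hm : 0 < m) : ∃ jj : Fin (a + b), fm a m b jj = j := by
  by_cases hlt : (j : ℕ) < a
  · exact ⟨⟨j, by omega⟩, Fin.ext (by rw [fm_val_lt (by simpa using hlt)])⟩
  · refine ⟨⟨(j : ℕ) - m, by omega⟩, Fin.ext ?_⟩
    rw [fm_val_ge (by simp; omega)]
    simp; omega

lemma peel_noncrossing (a m b : ℕ) (p : Setoid (Pt 0 ((a + m) + b))) (hp : Noncrossing p) :
    Noncrossing (Setoid.comap (Sum.map id (fm a m b)) p) := by
  have step : ∀ {ju jv : Fin (a + b)},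
      ptIdx (Sum.inr ju : Pt 0 (a + b)) < ptIdx (Sum.inr jv : Pt 0 (a + b)) →
      ptIdx (Sum.inr (fm a m b ju) : Pt 0 ((a + m) + b))
        < ptIdx (Sum.inr (fm a m b jv) : Pt 0 ((a + m) + b)) := by
    intro ju jv h
    have h' : 0 + ((a + b) - 1 - (ju : ℕ)) < 0 + ((a + b) - 1 - (jv : ℕ)) := h
    have hju := ju.isLt
    have hjv := jv.isLt
    have hlt : (jv : ℕ) < (ju : ℕ) := by omega
    have hmono : ((fm a m b jv) : ℕ) < ((fm a m b ju) : ℕ) := fm_strictMono hlt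
    have hbound := (fm a m b ju).isLt
    show 0 + (((a + m) + b) - 1 - ((fm a m b ju) : ℕ))
      < 0 + (((a + m) + b) - 1 - ((fm a m b jv) : ℕ))
    omega
  intro u v x y h1 h2 h3 r1 r2
  rcases u with i | ju
  · exact i.elim0
  rcases v with i | jv
  · exact i.elim0
  rcases x with i | jx
  · exact i.elim0
  rcases y with i | jy
  · exact i.elim0
  exact hp (Sum.inr (fm a m b ju)) (Sum.inr (fm a m b jv)) (Sum.inr (fm a m b jx))
    (Sum.inr (fm a m b jy)) (step h1) (step h2) (step h3) r1 r2

lemma peel_wordLo (a m b : ℕ) (hm : 0 < m) (p : Setoid (Pt 0 ((a + m) + b)))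
    (hB : ∀ j : Fin ((a + m) + b), p.r (Sum.inr j) (Sum.inr ⟨a, by omega⟩) ↔
      (a ≤ (j : ℕ) ∧ (j : ℕ) < a + m))
    (h : Fin ((a + m) + b) → Γ) (z0 : Pt 0 (a + b)) :
    wordLo h p (Quotient.mk p (Sum.map id (fm a m b) z0))
      = wordLo (fun j => h (fm a m b j)) (Setoid.comap (Sum.map id (fm a m b)) p)
          (Quotient.mk _ z0) := by
  set pr := Setoid.comap (Sum.map (@id (Fin 0)) (fm a m b)) p with hpr
  rcases z0 with i | jz
  · exact i.elim0
  have hctr : ¬ p.r (Sum.map id (fm a m b) (Sum.inr jz)) (Sum.inr ⟨a, by omega⟩) := by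
    show ¬ p.r (Sum.inr (fm a m b jz)) _
    rw [hB]
    by_cases hlt : (jz : ℕ) < a
    · rw [fm_val_lt hlt]; omega
    · rw [fm_val_ge (by omega)]
      have := jz.isLt
      omega
  rw [wordLo, wordLo]
  rw [filter_map_mono (fm a m b) fm_strictMono
    (fun j => Quotient.mk p (Sum.inr j) = Quotient.mk p (Sum.map id (fm a m b) (Sum.inr jz)))
    (fun j hj => by
      refine fm_preimage j ?_ hm
      intro hjB
      apply hctr
      exact p.trans' (p.symm' ((mk_eq_mk _ _ _).mp hj)) ((hB j).mpr hjB))]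
  rw [List.map_map]
  have hfil : (fun i : Fin (a + b) => decide (Quotient.mk p (Sum.inr (fm a m b i))
        = Quotient.mk p (Sum.map id (fm a m b) (Sum.inr jz))))
      = (fun j : Fin (a + b) => decide (Quotient.mk pr (Sum.inr j)
        = Quotient.mk pr (Sum.inr jz))) := by
    funext j
    apply decide_eq_decide.mpr
    rw [mk_eq_mk, mk_eq_mk]
    exact Iff.rfl
  rw [hfil]
  rfl

lemma peel_decok (a m b : ℕ) (hm : 0 < m) (p : Setoid (Pt 0 ((a + m) + b)))
    (hB : ∀ j : Fin ((a + m) + b), p.r (Sum.inr j) (Sum.inr ⟨a, by omega⟩) ↔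
      (a ≤ (j : ℕ) ∧ (j : ℕ) < a + m))
    (g : Fin 0 → Γ) (h : Fin ((a + m) + b) → Γ) (hd : DecOK p g h) :
    DecOK (Setoid.comap (Sum.map id (fm a m b)) p) (fun i : Fin 0 => i.elim0)
      (fun j => h (fm a m b j)) := by
  intro cls
  obtain ⟨z0, rfl⟩ := Quotient.exists_rep cls
  have h1 := hd (Quotient.mk p (Sum.map id (fm a m b) z0))
  rw [wordUp] at h1
  simp only [List.finRange_zero, List.filter_nil, List.map_nil, List.prod_nil] at h1
  rw [wordUp]
  simp only [List.finRange_zero, List.filter_nil, List.map_nil, List.prod_nil]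
  rw [← peel_wordLo a m b hm p hB h z0, ← h1]

lemma peel_block_prod (a m b : ℕ) (hm : 0 < m) (p : Setoid (Pt 0 ((a + m) + b)))
    (hB : ∀ j : Fin ((a + m) + b), p.r (Sum.inr j) (Sum.inr ⟨a, by omega⟩) ↔
      (a ≤ (j : ℕ) ∧ (j : ℕ) < a + m))
    (g : Fin 0 → Γ) (h : Fin ((a + m) + b) → Γ) (hd : DecOK p g h) :
    (List.ofFn (fun t : Fin m => h (Fin.castAdd b (Fin.natAdd a t)))).prod = 1 := by
  have h1 := hd (Quotient.mk p (Sum.inr ⟨a, by omega⟩))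
  rw [wordUp] at h1
  simp only [List.finRange_zero, List.filter_nil, List.map_nil, List.prod_nil] at h1
  rw [wordLo] at h1
  rw [filter_map_mono (fun t : Fin m => Fin.castAdd b (Fin.natAdd a t))
    (fun s t hst => by
      show ((Fin.castAdd b (Fin.natAdd a s)) : ℕ) < ((Fin.castAdd b (Fin.natAdd a t)) : ℕ)
      have : (s : ℕ) < (t : ℕ) := hst
      simp only [Fin.coe_castAdd, Fin.coe_natAdd]
      omega)
    (fun j => Quotient.mk p (Sum.inr j) = Quotient.mk p (Sum.inr ⟨a, by omega⟩))
    (fun j hj => by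
      have hjB := (hB j).mp ((mk_eq_mk _ _ _).mp hj)
      exact ⟨⟨(j : ℕ) - a, by omega⟩, Fin.ext (by
        simp only [Fin.coe_castAdd, Fin.coe_natAdd]
        omega)⟩)] at h1
  rw [List.filter_eq_self.mpr (fun t _ => by
    refine decide_eq_true ((mk_eq_mk _ _ _).mpr ((hB _).mpr ?_))
    simp only [Fin.coe_castAdd, Fin.coe_natAdd]
    constructor <;> omega)] at h1
  rw [List.map_map] at h1
  rw [List.ofFn_eq_map]
  exact h1.symm


lemma exists_interval (L : ℕ) (hL : 0 < L) (p : Setoid (Pt 0 L)) (hp : Noncrossing p) :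
    ∃ (a m b : ℕ), 0 < m ∧ L = (a + m) + b ∧
      ∃ ha : a < L, ∀ j : Fin L, p.r (Sum.inr j) (Sum.inr ⟨a, ha⟩) ↔
        (a ≤ (j : ℕ) ∧ (j : ℕ) < a + m) := by
  classical
  set Bs : Fin L → Finset (Fin L) :=
    fun j => Finset.univ.filter (fun t => p.r (Sum.inr t) (Sum.inr j)) with hBs
  have hmem_iff : ∀ j t : Fin L, t ∈ Bs j ↔ p.r (Sum.inr t) (Sum.inr j) := by
    intro j t
    rw [hBs, Finset.mem_filter]
    simp
  have hne : ∀ j, (Bs j).Nonempty := fun j => ⟨j, (hmem_iff j j).mpr (p.refl' _)⟩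
  set span : Fin L → ℕ := fun j => ((Bs j).max' (hne j) : ℕ) - ((Bs j).min' (hne j) : ℕ)
    with hspan
  obtain ⟨j0, -, hj0min⟩ := Finset.exists_min_image Finset.univ span ⟨⟨0, hL⟩, Finset.mem_univ _⟩
  set mn := (Bs j0).min' (hne j0) with hmn
  set mx := (Bs j0).max' (hne j0) with hmx
  have hmn_rel : p.r (Sum.inr mn) (Sum.inr j0) := (hmem_iff _ _).mp (Finset.min'_mem _ _)
  have hmx_rel : p.r (Sum.inr mx) (Sum.inr j0) := (hmem_iff _ _).mp (Finset.max'_mem _ _)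
  have hmnmx0 : mn ≤ mx := Finset.min'_le _ _ (Finset.max'_mem _ _)
  have hmnmx : (mn : ℕ) ≤ (mx : ℕ) := hmnmx0
  have hmxL := mx.isLt
  have hmnL := mn.isLt
  refine ⟨(mn : ℕ), (mx : ℕ) - (mn : ℕ) + 1, L - ((mx : ℕ) + 1), by omega, by omega, by omega, ?_⟩
  have hcmn : (⟨(mn : ℕ), by omega⟩ : Fin L) = mn := Fin.ext rfl
  intro j
  rw [show (⟨(mn : ℕ), _⟩ : Fin L) = mn from Fin.ext rfl]
  constructor
  · intro hrel
    have hj : j ∈ Bs j0 := (hmem_iff _ _).mpr (p.trans' hrel hmn_rel)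
    have h1 : mn ≤ j := Finset.min'_le _ _ hj
    have h2 : j ≤ mx := Finset.le_max' _ _ hj
    have h1' : (mn : ℕ) ≤ (j : ℕ) := h1
    have h2' : (j : ℕ) ≤ (mx : ℕ) := h2
    omega
  · rintro ⟨hj1, hj2⟩
    have hj2' : (j : ℕ) ≤ (mx : ℕ) := by omega
    by_contra hnot
    have hnotj0 : ¬ p.r (Sum.inr j) (Sum.inr j0) := fun hc =>
      hnot (p.trans' hc (p.symm' hmn_rel))
    have hjmn : j ≠ mn := fun hc => hnot (hc ▸ p.refl' _)
    have hjmx : j ≠ mx := fun hc => hnotj0 (hc ▸ hmx_rel)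
    have hjmn' : (mn : ℕ) < (j : ℕ) := lt_of_le_of_ne hj1 (fun hc => hjmn (Fin.ext hc.symm))
    have hjmx' : (j : ℕ) < (mx : ℕ) :=
      lt_of_le_of_ne hj2' (fun hc => hjmx (Fin.ext hc))
    have hsub : ∀ t : Fin L, t ∈ Bs j → (mn : ℕ) < (t : ℕ) ∧ (t : ℕ) < (mx : ℕ) := by
      intro t ht
      have hrel : p.r (Sum.inr t) (Sum.inr j) := (hmem_iff _ _).mp ht
      have htj0 : ¬ p.r (Sum.inr t) (Sum.inr j0) := fun hc =>
        hnotj0 (p.trans' (p.symm' hrel) hc)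
      have htmn : (t : ℕ) ≠ (mn : ℕ) := fun hc =>
        htj0 ((Fin.ext hc : t = mn) ▸ hmn_rel)
      have htmx : (t : ℕ) ≠ (mx : ℕ) := fun hc =>
        htj0 ((Fin.ext hc : t = mx) ▸ hmx_rel)
      rcases Nat.lt_or_ge (t : ℕ) (mn : ℕ) with hcase | hcase
      · -- t strictly left of mn : crossing (mx, j, mn, t)
        exfalso
        have hcross := hp (Sum.inr mx) (Sum.inr j) (Sum.inr mn) (Sum.inr t)
          (show 0 + (L - 1 - (mx : ℕ)) < 0 + (L - 1 - (j : ℕ)) by omega)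
          (show 0 + (L - 1 - (j : ℕ)) < 0 + (L - 1 - (mn : ℕ)) by omega)
          (show 0 + (L - 1 - (mn : ℕ)) < 0 + (L - 1 - (t : ℕ)) by omega)
          (p.trans' hmx_rel (p.symm' hmn_rel)) (p.symm' hrel)
        exact hnotj0 (p.trans' (p.symm' hcross) hmx_rel)
      rcases Nat.lt_or_ge (mx : ℕ) (t : ℕ) with hcase2 | hcase2
      · -- t strictly right of mx : crossing (t, mx, j, mn)
        exfalso
        have hcross := hp (Sum.inr t) (Sum.inr mx) (Sum.inr j) (Sum.inr mn)
          (show 0 + (L - 1 - (t : ℕ)) < 0 + (L - 1 - (mx : ℕ)) by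
            have := t.isLt; omega)
          (show 0 + (L - 1 - (mx : ℕ)) < 0 + (L - 1 - (j : ℕ)) by omega)
          (show 0 + (L - 1 - (j : ℕ)) < 0 + (L - 1 - (mn : ℕ)) by omega)
          hrel (p.trans' hmx_rel (p.symm' hmn_rel))
        exact htj0 (p.trans' hcross hmx_rel)
      · omega
    -- now the block of j has strictly smaller span
    have hminj := hsub _ (Finset.min'_mem (Bs j) (hne j))
    have hmaxj := hsub _ (Finset.max'_mem (Bs j) (hne j))
    have hle : (mx : ℕ) - (mn : ℕ)
        ≤ (((Bs j).max' (hne j) : Fin L) : ℕ) - (((Bs j).min' (hne j) : Fin L) : ℕ) :=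
      hj0min j (Finset.mem_univ j)
    omega


lemma append_elim0' {l : ℕ} (h : Fin l → Γ) :
    Fin.append h (fun i : Fin 0 => i.elim0) = h := by
  funext j
  refine Fin.addCases (fun j1 => ?_) (fun j2 => j2.elim0) j
  rw [Fin.append_left]
  exact congrArg h (Fin.ext rfl)

lemma mid_append_eq {l : ℕ} (h : Fin l → Γ) (c : Γ) :
    Fin.append h ![c, c⁻¹]
      = Fin.append (Fin.snoc h c : Fin (l + 1) → Γ) (fun _ : Fin 1 => c⁻¹) := by
  funext j
  refine Fin.addCases (fun j1 => ?_) (fun j2 => ?_) j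
  · rw [Fin.append_left]
    rw [show Fin.castAdd 2 j1 = Fin.castAdd 1 j1.castSucc from Fin.ext rfl]
    rw [Fin.append_left, Fin.snoc_castSucc]
  · rw [Fin.append_right]
    rcases j2 with ⟨jv, hjv⟩
    match jv, hjv with
    | 0, _ =>
      rw [show Fin.natAdd l (⟨0, by omega⟩ : Fin 2) = Fin.castAdd 1 (Fin.last l) from
        Fin.ext (by simp)]
      rw [Fin.append_left, Fin.snoc_last]
      rfl
    | 1, _ =>
      rw [show Fin.natAdd l (⟨1, by omega⟩ : Fin 2) = Fin.natAdd (l + 1) (0 : Fin 1) from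
        Fin.ext (by simp)]
      rw [Fin.append_right]
      rfl

lemma row_generated : ∀ (l : ℕ) (p : Setoid (Pt 0 l)) (h : Fin l → Γ),
    Noncrossing p → DecOK p (fun i => i.elim0) h →
      GenDec Γ p (fun i : Fin 0 => i.elim0) h := by
  intro l
  induction l using Nat.strong_induction_on with
  | _ l ih =>
    intro p h hp hd
    rcases Nat.eq_zero_or_pos l with hl | hl
    · subst hl
      exact gen_empty p _ h
    · obtain ⟨a, m, b, hm, heq, ha, hB⟩ := exists_interval l hl p hp
      subst heq
      set p' := Setoid.comap (Sum.map (@id (Fin 0)) (fm a m b)) p with hp'def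
      have hp' := peel_noncrossing a m b p hp
      have hd' := peel_decok a m b hm p hB _ h hd
      have G1 := ih (a + b) (by omega) p' (fun j => h (fm a m b j)) hp' hd'
      have hprod := peel_block_prod a m b hm p hB _ h hd
      have Gq := GenDec.tensor (GenDec.tensor
        (gen_id a (fun i : Fin a => h (Fin.castAdd b (Fin.castAdd m i))))
        (gen_block m hm (fun t : Fin m => h (Fin.castAdd b (Fin.natAdd a t))) hprod
          (fun i : Fin 0 => i.elim0)))
        (gen_id b (fun i : Fin b => h (Fin.natAdd (a + m) i)))
      have hup : Fin.append (Fin.append (fun i : Fin a => h (Fin.castAdd b (Fin.castAdd m i)))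
            (fun i : Fin 0 => i.elim0)) (fun i : Fin b => h (Fin.natAdd (a + m) i))
          = (fun j : Fin (a + b) => h (fm a m b j)) := by
        funext j
        refine Fin.addCases (fun j1 => ?_) (fun j2 => ?_) j
        · rw [Fin.append_left]
          refine Fin.addCases (fun j2 => ?_) (fun j2 => j2.elim0) j1
          rw [Fin.append_left]
          refine congrArg h (Fin.ext ?_)
          rw [fm_val_lt (a := a) (m := m) (b := b) (j := Fin.castAdd b (Fin.castAdd 0 j2))
            (by simpa using j2.isLt)]
          simp only [Fin.coe_castAdd]
        · rw [Fin.append_right]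
          refine congrArg h (Fin.ext ?_)
          rw [fm_val_ge (a := a) (m := m) (b := b) (j := Fin.natAdd (a + 0) j2)
            (by simp only [Fin.coe_natAdd]; omega)]
          simp only [Fin.coe_natAdd]
          omega
      have hlo : Fin.append (Fin.append (fun i : Fin a => h (Fin.castAdd b (Fin.castAdd m i)))
            (fun t : Fin m => h (Fin.castAdd b (Fin.natAdd a t))))
            (fun i : Fin b => h (Fin.natAdd (a + m) i)) = h := by
        funext j
        refine Fin.addCases (fun j1 => ?_) (fun j2 => ?_) j
        · rw [Fin.append_left]
          refine Fin.addCases (fun j2 => ?_) (fun j2 => ?_) j1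
          · rw [Fin.append_left]
          · rw [Fin.append_right]
        · rw [Fin.append_right]
      have H := GenDec.comp G1 (Gq.congr rfl hup hlo)
      exact H.congr (peel_eq a m b hm p hB) rfl rfl

end Helpers

/-- Every decorated noncrossing partition is generated by the elementary
decorated partitions under tensor products, compositions and adjoints. -/
theorem decorated_generated {k l : ℕ} (p : Setoid (Pt k l))
    (g : Fin k → Γ) (h : Fin l → Γ) (hp : Noncrossing p) (hd : DecOK p g h) :
    GenDec Γ p g h := by
  induction k generalizing l with
  | zero =>
    have hg : g = (fun i : Fin 0 => i.elim0) := fin0_eq _ _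
    subst hg
    exact row_generated l p h hp hd
  | succ k ih =>
    set c : Γ := (g (Fin.last k))⁻¹ with hc
    have G := ih (Setoid.comap (rho k l) p) (fun i => g i.castSucc) (Fin.snoc h c)
      (rot_noncrossing p hp) (rot_decok p g h hd)
    have T := GenDec.tensor G (GenDec.id (g (Fin.last k)))
    have hfix : (fun _ : Fin 1 => c⁻¹) = (fun _ : Fin 1 => g (Fin.last k)) :=
      funext fun _ => by rw [hc, inv_inv]
    have Gq := (GenDec.tensor (gen_id l h) (gen_cap c)).congr rfl
      ((mid_append_eq h c).trans (congrArg _ hfix)) (append_elim0' h)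
    have H := GenDec.comp T Gq
    exact H.congr (rot_eq k l p) (append_castSucc_last g) rfl
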